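/- Let 𝒮(ℝ) be the Schwartz space of rapidly decreasing smooth complex-valued functions on ℝ, and define the creation operator A_+ f = (−f′ + x f)/√2 and the annihilation operator A_− f = (f′ + x f)/√2. Both A_+ and A_− are continuous linear operators on 𝒮(ℝ), but neither is topologizable: for each of A_+ and A_−, there exists a continuous seminorm p on 𝒮(ℝ) such that for every continuous seminorm q on 𝒮(ℝ) there is m ∈ ℕ with sup{ p(A_±^m f) : f ∈ 𝒮(ℝ), q(f) ≤ 1 } = ∞. In particular, neither A_+ nor A_− is power bounded or mean ergodic on 𝒮(ℝ). -/

import Mathlib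

open Filter Finset

noncomputable section
set_option synthInstance.maxHeartbeats 1000000
set_option maxHeartbeats 1000000

/-- Multiplication by the variable, `f ↦ (t ↦ t·f(t))`, on the Schwartz space. -/
def xmulS : SchwartzMap ℝ ℂ →L[ℝ] SchwartzMap ℝ ℂ :=
  SchwartzMap.bilinLeftCLM (ContinuousLinearMap.mul ℝ ℂ).flip
    Complex.ofRealCLM.hasTemperateGrowth

/-- The creation operator `A₊ f = (-f' + x f)/√2` on the Schwartz space. -/
def creationOp (f : SchwartzMap ℝ ℂ) : SchwartzMap ℝ ℂ :=
  (Real.sqrt 2)⁻¹ • (xmulS f - SchwartzMap.derivCLM ℝ ℂ f)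

/-- The annihilation operator `A₋ f = (f' + x f)/√2` on the Schwartz space. -/
def annihilationOp (f : SchwartzMap ℝ ℂ) : SchwartzMap ℝ ℂ :=
  (Real.sqrt 2)⁻¹ • (SchwartzMap.derivCLM ℝ ℂ f + xmulS f)

/-- An operator on the Schwartz space is power bounded. -/
def PowerBoundedS (T : SchwartzMap ℝ ℂ → SchwartzMap ℝ ℂ) : Prop :=
  ∀ p : Seminorm ℝ (SchwartzMap ℝ ℂ), Continuous p →
    ∃ q : Seminorm ℝ (SchwartzMap ℝ ℂ), Continuous q ∧
      ∀ m : ℕ, 1 ≤ m → ∀ f, p (T^[m] f) ≤ q f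

/-- An operator on the Schwartz space is mean ergodic. -/
def MeanErgodicS (T : SchwartzMap ℝ ℂ → SchwartzMap ℝ ℂ) : Prop :=
  ∃ P : SchwartzMap ℝ ℂ →L[ℂ] SchwartzMap ℝ ℂ, ∀ f,
    Tendsto (fun n : ℕ => (n : ℂ)⁻¹ • ∑ m ∈ Icc 1 n, T^[m] f) atTop (nhds (P f))

namespace S19

open Real MeasureTheory Polynomial

def gR (x : ℝ) : ℝ := Real.exp (-(x ^ 2) / 2)

lemma gR_pos (x : ℝ) : 0 < gR x := Real.exp_pos _

lemma gR_le_one (x : ℝ) : gR x ≤ 1 := by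
  have : -(x ^ 2) / 2 ≤ 0 := by nlinarith [sq_nonneg x]
  simpa [gR] using Real.exp_le_one_iff.mpr this

lemma hasDerivAt_gR (x : ℝ) : HasDerivAt gR (-x * gR x) x := by
  have h1 : HasDerivAt (fun y : ℝ => -(y ^ 2) / 2) (-x) x := by
    have := ((hasDerivAt_pow 2 x).neg).div_const 2
    refine this.congr_deriv ?_
    ring
  have h2 := (Real.hasDerivAt_exp (-(x ^ 2) / 2)).comp x h1
  refine h2.congr_deriv ?_
  simp [gR, mul_comm]

lemma contDiff_gR : ContDiff ℝ ((⊤ : ℕ∞) : WithTop ℕ∞) gR :=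
  Real.contDiff_exp.comp (((contDiff_id (𝕜 := ℝ)).pow 2).neg.div_const 2)

def gC (x : ℝ) : ℂ := (gR x : ℂ)

lemma hasDerivAt_gC (x : ℝ) : HasDerivAt gC ((-x * gR x : ℝ) : ℂ) x :=
  (hasDerivAt_gR x).ofReal_comp

lemma contDiff_gC : ContDiff ℝ ((⊤ : ℕ∞) : WithTop ℕ∞) gC :=
  Complex.ofRealCLM.contDiff.comp contDiff_gR

/-- Polynomial factors of the iterated derivatives of the Gaussian. -/
def gp : ℕ → Polynomial ℝ
  | 0 => 1
  | n + 1 => (gp n).derivative - Polynomial.X * gp n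

lemma iteratedDeriv_gC (n : ℕ) :
    iteratedDeriv n gC = fun x : ℝ => (((gp n).eval x : ℝ) : ℂ) * gC x := by
  induction n with
  | zero => funext x; simp [gp]
  | succ n ih =>
    funext x
    rw [iteratedDeriv_succ, ih]
    have h1 : HasDerivAt (fun y : ℝ => (((gp n).eval y : ℝ) : ℂ))
        (((gp n).derivative.eval x : ℝ) : ℂ) x := ((gp n).hasDerivAt x).ofReal_comp
    have h2 := h1.mul (hasDerivAt_gC x)
    rw [show (fun x : ℝ => (((gp n).eval x : ℝ) : ℂ) * gC x)
      = (fun y : ℝ => (((gp n).eval y : ℝ) : ℂ)) * gC from rfl, h2.deriv]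
    simp only [gp, gC, Polynomial.eval_sub, Polynomial.eval_mul, Polynomial.eval_X]
    push_cast
    ring

lemma pow_mul_gR_le (d : ℕ) (x : ℝ) : |x| ^ d * gR x ≤ 2 ^ d * d.factorial := by
  have hfac : (0:ℝ) < d.factorial := by positivity
  have hkey : (x ^ 2 / 2) ^ d / d.factorial ≤ Real.exp (x ^ 2 / 2) := by
    have h := Real.sum_le_exp_of_nonneg (x := x ^ 2 / 2) (by positivity) (d + 1)
    refine le_trans ?_ h
    refine Finset.single_le_sum (f := fun i => (x ^ 2 / 2) ^ i / i.factorial)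
      (fun i _ => by positivity) (Finset.self_mem_range_succ d)
  have hgR : gR x = (Real.exp (x ^ 2 / 2))⁻¹ := by
    rw [gR, neg_div, Real.exp_neg]
  rcases le_total |x| 1 with h1 | h1
  · have : |x| ^ d * gR x ≤ 1 := by
      have := gR_le_one x
      have hp : |x| ^ d ≤ 1 := pow_le_one₀ (abs_nonneg x) h1
      nlinarith [gR_pos x, pow_nonneg (abs_nonneg x) d]
    refine this.trans ?_
    have h2d : (1:ℝ) ≤ 2 ^ d := one_le_pow₀ (by norm_num)
    have hf1 : (1:ℝ) ≤ d.factorial := by exact_mod_cast d.factorial_pos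
    nlinarith
  · have hxd : (1:ℝ) ≤ |x| ^ d := one_le_pow₀ h1
    have hsq : |x| ^ (2 * d) = (x ^ 2) ^ d := by
      rw [pow_mul, sq_abs]
    have h2 : |x| ^ d * |x| ^ d ≤ (x ^ 2) ^ d := by
      rw [← hsq, two_mul, pow_add]
    have h3 : |x| ^ d ≤ (x ^ 2) ^ d := by nlinarith [pow_nonneg (abs_nonneg x) d]
    have h4 : |x| ^ d ≤ 2 ^ d * d.factorial * Real.exp (x ^ 2 / 2) := by
      have : (x ^ 2 / 2) ^ d = (x ^ 2) ^ d / 2 ^ d := div_pow _ _ _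
      rw [this] at hkey
      have h2d : (0:ℝ) < 2 ^ d := by positivity
      calc |x| ^ d ≤ (x ^ 2) ^ d := h3
        _ ≤ 2 ^ d * d.factorial * Real.exp (x ^ 2 / 2) := by
            rw [div_div] at hkey
            have := (div_le_iff₀ (by positivity)).mp hkey
            linarith
    rw [hgR]
    have hexp : (0:ℝ) < Real.exp (x ^ 2 / 2) := Real.exp_pos _
    rw [mul_inv_le_iff₀ hexp]
    linarith

def gaussS : SchwartzMap ℝ ℂ where
  toFun := gC
  smooth' := contDiff_gC
  decay' := by
    intro k n
    refine ⟨∑ i ∈ Finset.range ((gp n).natDegree + 1),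
      |(gp n).coeff i| * (2 ^ (k + i) * (k + i).factorial), fun x => ?_⟩
    rw [norm_iteratedFDeriv_eq_norm_iteratedDeriv, iteratedDeriv_gC]
    have hnorm : ‖(((gp n).eval x : ℝ) : ℂ) * gC x‖ = |(gp n).eval x| * gR x := by
      simp [gC, abs_of_pos (gR_pos x)]
    rw [hnorm]
    have heval : |(gp n).eval x| ≤
        ∑ i ∈ Finset.range ((gp n).natDegree + 1), |(gp n).coeff i| * |x| ^ i := by
      conv_lhs => rw [Polynomial.eval_eq_sum_range]
      refine (Finset.abs_sum_le_sum_abs _ _).trans ?_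
      refine Finset.sum_le_sum fun i _ => ?_
      rw [abs_mul, abs_pow]
    have hxg : 0 ≤ |x| ^ k * gR x :=
      mul_nonneg (pow_nonneg (abs_nonneg x) k) (gR_pos x).le
    have step1 : ‖x‖ ^ k * (|(gp n).eval x| * gR x)
        ≤ ∑ i ∈ Finset.range ((gp n).natDegree + 1),
            |(gp n).coeff i| * (|x| ^ (k + i) * gR x) := by
      rw [Real.norm_eq_abs]
      calc |x| ^ k * (|(gp n).eval x| * gR x)
          = (|x| ^ k * gR x) * |(gp n).eval x| := by ring
        _ ≤ (|x| ^ k * gR x) * (∑ i ∈ Finset.range ((gp n).natDegree + 1),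
              |(gp n).coeff i| * |x| ^ i) := mul_le_mul_of_nonneg_left heval hxg
        _ = ∑ i ∈ Finset.range ((gp n).natDegree + 1),
              |(gp n).coeff i| * (|x| ^ (k + i) * gR x) := by
            rw [Finset.mul_sum]
            refine Finset.sum_congr rfl fun i _ => ?_
            rw [pow_add]; ring
    refine step1.trans (Finset.sum_le_sum fun i _ => ?_)
    exact mul_le_mul_of_nonneg_left (pow_mul_gR_le (k + i) x) (abs_nonneg _)

lemma gaussS_apply (x : ℝ) : gaussS x = (gR x : ℂ) := rfl

lemma hasTemperateGrowth_sub (a : ℝ) :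
    Function.HasTemperateGrowth (fun x : ℝ => x - a) := by
  refine Function.HasTemperateGrowth.of_fderiv ?_
    (differentiable_id.sub_const a) (k := 1) (C := 1 + |a|) (fun x => ?_)
  · have hfd : (fderiv ℝ fun x : ℝ => x - a) = fun _ => ContinuousLinearMap.id ℝ ℝ := by
      funext x
      have : HasFDerivAt (fun x : ℝ => x - a) (ContinuousLinearMap.id ℝ ℝ) x :=
        (hasFDerivAt_id x).sub_const a
      exact this.fderiv
    rw [hfd]
    exact Function.HasTemperateGrowth.const _
  · simp only [Real.norm_eq_abs, pow_one]
    have h1 : |x - a| ≤ |x| + |a| := abs_sub _ _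
    nlinarith [abs_nonneg (x - a), abs_nonneg a, abs_nonneg x]

def φS (a : ℝ) : SchwartzMap ℝ ℂ :=
  SchwartzMap.compCLM ℝ (hasTemperateGrowth_sub a)
    ⟨1, 1 + |a|, fun x => by
      simp only [Real.norm_eq_abs, pow_one]
      have h1 : |x| ≤ |x - a| + |a| := by
        calc |x| = |x - a + a| := by ring_nf
          _ ≤ |x - a| + |a| := abs_add_le _ _
      nlinarith [abs_nonneg (x - a), abs_nonneg a, abs_nonneg x]⟩ gaussS

lemma φS_apply (a x : ℝ) : φS a x = (gR (x - a) : ℂ) := rfl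

lemma hasDerivAt_φS (a x : ℝ) :
    HasDerivAt (⇑(φS a)) (((a - x) * gR (x - a) : ℝ) : ℂ) x := by
  have hsub : HasDerivAt (fun y : ℝ => y - a) 1 x := by
    simpa using (hasDerivAt_id x).sub_const a
  have hR : HasDerivAt (fun y : ℝ => gR (y - a)) ((a - x) * gR (x - a)) x := by
    have := (hasDerivAt_gR (x - a)).comp x hsub
    refine this.congr_deriv ?_
    ring
  have hC := hR.ofReal_comp
  exact hC

lemma deriv_φS (a x : ℝ) :
    deriv (⇑(φS a)) x = (((a - x) * gR (x - a) : ℝ) : ℂ) := (hasDerivAt_φS a x).deriv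

lemma seminorm_φS_le (k n : ℕ) (a : ℝ) :
    SchwartzMap.seminorm ℝ k n (φS a) ≤ (1 + |a|) ^ k * (2 ^ k *
      (SchwartzMap.seminorm ℝ 0 n gaussS + SchwartzMap.seminorm ℝ k n gaussS)) := by
  have hM : (0:ℝ) ≤ (1 + |a|) ^ k * (2 ^ k *
      (SchwartzMap.seminorm ℝ 0 n gaussS + SchwartzMap.seminorm ℝ k n gaussS)) := by
    have h01 : 0 ≤ SchwartzMap.seminorm ℝ 0 n gaussS := apply_nonneg _ _
    have h02 : 0 ≤ SchwartzMap.seminorm ℝ k n gaussS := apply_nonneg _ _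
    positivity
  refine SchwartzMap.seminorm_le_bound' (𝕜 := ℝ) k n (φS a) hM fun x => ?_
  have hco : ⇑(φS a) = fun y : ℝ => (⇑gaussS) (y + -a) := by
    funext y
    show gC (y - a) = gC (y + -a)
    rw [sub_eq_add_neg]
  rw [hco, iteratedDeriv_comp_add_const]
  set y := x + -a with hy
  have h1 : |x| ≤ (1 + |a|) * (1 + |y|) := by
    have hxy : |x| ≤ |y| + |a| := by
      have hx : x = y + a := by rw [hy]; ring
      rw [hx]
      exact abs_add_le y a
    nlinarith [abs_nonneg y, abs_nonneg a]
  have h1k : |x| ^ k ≤ ((1 + |a|) * (1 + |y|)) ^ k :=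
    pow_le_pow_left₀ (abs_nonneg x) h1 k
  have h2 : (1 + |y|) ^ k ≤ 2 ^ k * (1 + |y| ^ k) := by
    calc (1 + |y|) ^ k ≤ (2 * max 1 |y|) ^ k := by
          refine pow_le_pow_left₀ (by positivity) ?_ k
          rcases le_total |y| 1 with h | h
          · rw [max_eq_left h]; linarith
          · rw [max_eq_right h]; linarith
      _ = 2 ^ k * (max 1 |y|) ^ k := mul_pow _ _ _
      _ ≤ 2 ^ k * (1 + |y| ^ k) := by
          have : (max 1 |y|) ^ k ≤ 1 + |y| ^ k := by
            rcases le_total |y| 1 with h | h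
            · rw [max_eq_left h, one_pow]
              have := pow_nonneg (abs_nonneg y) k
              linarith
            · rw [max_eq_right h]
              have : (0:ℝ) ≤ 1 := zero_le_one
              linarith
          have h2k : (0:ℝ) ≤ 2 ^ k := by positivity
          exact mul_le_mul_of_nonneg_left this h2k
  have h3 : ‖iteratedDeriv n (⇑gaussS) y‖ ≤ SchwartzMap.seminorm ℝ 0 n gaussS := by
    simpa using SchwartzMap.le_seminorm' ℝ 0 n gaussS y
  have h4 : |y| ^ k * ‖iteratedDeriv n (⇑gaussS) y‖ ≤ SchwartzMap.seminorm ℝ k n gaussS :=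
    SchwartzMap.le_seminorm' ℝ k n gaussS y
  have hnn : (0:ℝ) ≤ ‖iteratedDeriv n (⇑gaussS) y‖ := norm_nonneg _
  calc |x| ^ k * ‖iteratedDeriv n (⇑gaussS) y‖
      ≤ ((1 + |a|) * (1 + |y|)) ^ k * ‖iteratedDeriv n (⇑gaussS) y‖ :=
        mul_le_mul_of_nonneg_right h1k hnn
    _ = (1 + |a|) ^ k * ((1 + |y|) ^ k * ‖iteratedDeriv n (⇑gaussS) y‖) := by
        rw [mul_pow]; ring
    _ ≤ (1 + |a|) ^ k * ((2 ^ k * (1 + |y| ^ k)) * ‖iteratedDeriv n (⇑gaussS) y‖) := by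
        have hp : (0:ℝ) ≤ (1 + |a|) ^ k := by positivity
        exact mul_le_mul_of_nonneg_left (mul_le_mul_of_nonneg_right h2 hnn) hp
    _ = (1 + |a|) ^ k * (2 ^ k * (‖iteratedDeriv n (⇑gaussS) y‖
          + |y| ^ k * ‖iteratedDeriv n (⇑gaussS) y‖)) := by ring
    _ ≤ (1 + |a|) ^ k * (2 ^ k *
          (SchwartzMap.seminorm ℝ 0 n gaussS + SchwartzMap.seminorm ℝ k n gaussS)) := by
        have hp : (0:ℝ) ≤ (1 + |a|) ^ k := by positivity
        have h2k : (0:ℝ) ≤ 2 ^ k := by positivity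
        exact mul_le_mul_of_nonneg_left
          (mul_le_mul_of_nonneg_left (add_le_add h3 h4) h2k) hp

open MeasureTheory in
lemma integrable_mul (u v : SchwartzMap ℝ ℂ) :
    Integrable (fun x => u x * v x) volume := by
  have hb : ∀ x, ‖u x‖ ≤ SchwartzMap.seminorm ℝ 0 0 u := fun x =>
    SchwartzMap.norm_le_seminorm ℝ u x
  exact (v.integrable).bdd_mul u.continuous.aestronglyMeasurable (Filter.Eventually.of_forall hb)

open MeasureTheory in
lemma integral_ibp (u v : SchwartzMap ℝ ℂ) :
    ∫ x : ℝ, (deriv (⇑u) x * v x + u x * deriv (⇑v) x) = 0 := by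
  have hcu : deriv (⇑u) = ⇑(SchwartzMap.derivCLM ℝ ℂ u) :=
    funext fun x => (SchwartzMap.derivCLM_apply ℝ u x).symm
  have hcv : deriv (⇑v) = ⇑(SchwartzMap.derivCLM ℝ ℂ v) :=
    funext fun x => (SchwartzMap.derivCLM_apply ℝ v x).symm
  have hu' : Integrable (fun x => deriv (⇑u) x * v x) volume := by
    rw [hcu]; exact integrable_mul _ _
  have hv' : Integrable (fun x => u x * deriv (⇑v) x) volume := by
    rw [hcv]; exact integrable_mul _ _
  have hint : Integrable (fun x => deriv (⇑u) x * v x + u x * deriv (⇑v) x) volume :=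
    hu'.add hv'
  have hderiv : ∀ x : ℝ, HasDerivAt (fun y => u y * v y)
      (deriv (⇑u) x * v x + u x * deriv (⇑v) x) x := fun x =>
    (u.differentiableAt.hasDerivAt).mul (v.differentiableAt.hasDerivAt)
  have hIt : Tendsto (fun r : ℝ =>
      ∫ x in (-r)..r, (deriv (⇑u) x * v x + u x * deriv (⇑v) x)) atTop
      (nhds (∫ x : ℝ, (deriv (⇑u) x * v x + u x * deriv (⇑v) x))) :=
    intervalIntegral_tendsto_integral hint tendsto_neg_atTop_atBot tendsto_id
  have heq : (fun r : ℝ =>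
      ∫ x in (-r)..r, (deriv (⇑u) x * v x + u x * deriv (⇑v) x))
      = fun r : ℝ => u r * v r - u (-r) * v (-r) := by
    funext r
    exact intervalIntegral.integral_eq_sub_of_hasDerivAt
      (fun x _ => hderiv x) hint.intervalIntegrable
  have huv0 : Tendsto (fun x : ℝ => u x * v x) (Filter.cocompact ℝ) (nhds 0) := by
    have hu0 : Tendsto (⇑u) (Filter.cocompact ℝ) (nhds 0) := u.toZeroAtInfty.zero_at_infty'
    have hv0 : Tendsto (⇑v) (Filter.cocompact ℝ) (nhds 0) := v.toZeroAtInfty.zero_at_infty'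
    simpa using hu0.mul hv0
  have hR : Tendsto (fun r : ℝ => u r * v r - u (-r) * v (-r)) atTop (nhds 0) := by
    have h1 : Tendsto (fun x : ℝ => u x * v x) atTop (nhds 0) :=
      huv0.mono_left (by rw [cocompact_eq_atBot_atTop]; exact le_sup_right)
    have h2 : Tendsto (fun x : ℝ => u x * v x) atBot (nhds 0) :=
      huv0.mono_left (by rw [cocompact_eq_atBot_atTop]; exact le_sup_left)
    have h3 : Tendsto (fun r : ℝ => u (-r) * v (-r)) atTop (nhds 0) :=
      h2.comp tendsto_neg_atTop_atBot
    simpa using h1.sub h3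
  rw [heq] at hIt
  exact tendsto_nhds_unique hIt hR

/-- The pairing with a translated Gaussian. -/
def Lfun (a : ℝ) (g : SchwartzMap ℝ ℂ) : ℂ := ∫ x : ℝ, g x * φS a x

open MeasureTheory in
lemma Lfun_smul (a : ℝ) (z : ℂ) (g : SchwartzMap ℝ ℂ) :
    Lfun a (z • g) = z * Lfun a g := by
  unfold Lfun
  have h : (fun x : ℝ => (z • g) x * φS a x) = fun x : ℝ => z • (g x * φS a x) := by
    funext x
    rw [SchwartzMap.smul_apply, smul_eq_mul, smul_eq_mul]
    ring
  rw [h, integral_smul, smul_eq_mul]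

open MeasureTheory in
lemma Lfun_smul_real (a c : ℝ) (g : SchwartzMap ℝ ℂ) :
    Lfun a (c • g) = (c : ℂ) * Lfun a g := by
  have h : c • g = (c : ℂ) • g := by
    apply SchwartzMap.ext; intro x
    rw [SchwartzMap.smul_apply, SchwartzMap.smul_apply, Complex.real_smul, smul_eq_mul]
  rw [h, Lfun_smul]

open MeasureTheory in
lemma Lfun_sub (a : ℝ) (g h : SchwartzMap ℝ ℂ) :
    Lfun a (g - h) = Lfun a g - Lfun a h := by
  unfold Lfun
  have he : (fun x : ℝ => (g - h) x * φS a x)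
      = fun x : ℝ => g x * φS a x - h x * φS a x := by
    funext x; rw [SchwartzMap.sub_apply]; ring
  rw [he, integral_sub (integrable_mul g (φS a)) (integrable_mul h (φS a))]

lemma gR_eq : gR = fun x : ℝ => Real.exp (-(1/2) * x ^ 2) := by
  funext x; rw [gR]; ring_nf

open MeasureTheory in
lemma integrable_gR_shift (a : ℝ) : Integrable (fun x : ℝ => gR (x - a)) volume := by
  have h2 : Integrable gR volume := by
    rw [gR_eq]; exact integrable_exp_neg_mul_sq (by norm_num)
  exact h2.comp_sub_right a

open MeasureTheory in
lemma integral_gR_shift (a : ℝ) : ∫ x : ℝ, gR (x - a) = Real.sqrt (2 * π) := by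
  rw [integral_sub_right_eq_self (fun y => gR y) a]
  rw [gR_eq]
  rw [integral_gaussian (1/2)]
  congr 1
  ring

open MeasureTheory in
lemma Lfun_norm_le (a : ℝ) (g : SchwartzMap ℝ ℂ) :
    ‖Lfun a g‖ ≤ Real.sqrt (2 * π) * SchwartzMap.seminorm ℝ 0 0 g := by
  unfold Lfun
  have h1 : ‖∫ x : ℝ, g x * φS a x‖ ≤ ∫ x : ℝ, ‖g x * φS a x‖ :=
    norm_integral_le_integral_norm _
  have h2 : (∫ x : ℝ, ‖g x * φS a x‖)
      ≤ ∫ x : ℝ, (SchwartzMap.seminorm ℝ 0 0 g : ℝ) * gR (x - a) := by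
    refine integral_mono (integrable_mul g (φS a)).norm
      ((integrable_gR_shift a).const_mul _) fun x => ?_
    rw [norm_mul]
    have hφ : ‖(φS a) x‖ = gR (x - a) := by
      rw [φS_apply]
      simp [abs_of_pos (gR_pos (x - a))]
    rw [hφ]
    exact mul_le_mul_of_nonneg_right (SchwartzMap.norm_le_seminorm ℝ g x) (gR_pos _).le
  have h3 : (∫ x : ℝ, (SchwartzMap.seminorm ℝ 0 0 g : ℝ) * gR (x - a))
      = SchwartzMap.seminorm ℝ 0 0 g * Real.sqrt (2 * π) := by
    rw [integral_const_mul, integral_gR_shift]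
  calc ‖∫ x : ℝ, g x * φS a x‖ ≤ ∫ x : ℝ, ‖g x * φS a x‖ := h1
    _ ≤ SchwartzMap.seminorm ℝ 0 0 g * Real.sqrt (2 * π) := by rw [← h3]; exact h2
    _ = Real.sqrt (2 * π) * SchwartzMap.seminorm ℝ 0 0 g := mul_comm _ _

open MeasureTheory in
lemma Lfun_φS_self (a : ℝ) : Lfun a (φS a) = (Real.sqrt π : ℂ) := by
  unfold Lfun
  have h1 : (fun x : ℝ => φS a x * φS a x)
      = fun x : ℝ => ((Real.exp (-1 * (x - a) ^ 2) : ℝ) : ℂ) := by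
    funext x
    rw [φS_apply, ← Complex.ofReal_mul]
    congr 1
    rw [gR, ← Real.exp_add]
    congr 1
    ring
  rw [h1]
  have h2 : ∫ x : ℝ, Real.exp (-1 * (x - a) ^ 2) = Real.sqrt π := by
    have h3 : ∫ x : ℝ, Real.exp (-1 * (x - a) ^ 2)
        = ∫ x : ℝ, Real.exp (-1 * x ^ 2) :=
      integral_sub_right_eq_self (fun y => Real.exp (-1 * y ^ 2)) a
    rw [h3, integral_gaussian]
    norm_num
  rw [← h2]
  exact integral_ofReal (𝕜 := ℂ)

open MeasureTheory

lemma xmulS_apply (f : SchwartzMap ℝ ℂ) (x : ℝ) : xmulS f x = (x : ℂ) * f x := rfl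

lemma creationOp_apply (f : SchwartzMap ℝ ℂ) (x : ℝ) :
    creationOp f x = (((Real.sqrt 2)⁻¹ : ℝ) : ℂ) * ((x : ℂ) * f x - deriv (⇑f) x) := by
  simp only [creationOp, SchwartzMap.smul_apply, SchwartzMap.sub_apply, xmulS_apply,
    SchwartzMap.derivCLM_apply, Complex.real_smul]

lemma annihilationOp_apply (f : SchwartzMap ℝ ℂ) (x : ℝ) :
    annihilationOp f x = (((Real.sqrt 2)⁻¹ : ℝ) : ℂ) * (deriv (⇑f) x + (x : ℂ) * f x) := by
  simp only [annihilationOp, SchwartzMap.smul_apply, SchwartzMap.add_apply, xmulS_apply,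
    SchwartzMap.derivCLM_apply, Complex.real_smul]

lemma creationOp_smul_real (c : ℝ) (f : SchwartzMap ℝ ℂ) :
    creationOp (c • f) = c • creationOp f := by
  unfold creationOp
  rw [xmulS.map_smul, (SchwartzMap.derivCLM ℝ ℂ).map_smul, ← smul_sub, smul_comm]

lemma annihilationOp_smul_real (c : ℝ) (f : SchwartzMap ℝ ℂ) :
    annihilationOp (c • f) = c • annihilationOp f := by
  unfold annihilationOp
  rw [xmulS.map_smul, (SchwartzMap.derivCLM ℝ ℂ).map_smul, ← smul_add, smul_comm]

lemma iterate_smul_real {T : SchwartzMap ℝ ℂ → SchwartzMap ℝ ℂ}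
    (hsm : ∀ (c : ℝ) f, T (c • f) = c • T f) (m : ℕ) (c : ℝ) (f : SchwartzMap ℝ ℂ) :
    T^[m] (c • f) = c • T^[m] f := by
  induction m with
  | zero => simp
  | succ m ih => rw [Function.iterate_succ_apply', ih, hsm, ← Function.iterate_succ_apply' T m f]

lemma annihilationOp_φS (a : ℝ) :
    annihilationOp (φS a) = ((Real.sqrt 2)⁻¹ * a) • φS a := by
  apply SchwartzMap.ext; intro x
  rw [annihilationOp_apply, deriv_φS, SchwartzMap.smul_apply, φS_apply]
  simp only [Complex.real_smul]
  push_cast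
  ring

lemma annihilationOp_iter_φS (a : ℝ) (m : ℕ) :
    annihilationOp^[m] (φS a) = (((Real.sqrt 2)⁻¹ * a) ^ m) • φS a := by
  induction m with
  | zero => simp
  | succ m ih =>
    rw [Function.iterate_succ_apply', ih, annihilationOp_smul_real, annihilationOp_φS,
      smul_smul, pow_succ]

lemma Lfun_annihilationOp_iter (a : ℝ) (m : ℕ) :
    Lfun a (annihilationOp^[m] (φS a))
      = ((((Real.sqrt 2)⁻¹ * a) ^ m : ℝ) : ℂ) * Lfun a (φS a) := by
  rw [annihilationOp_iter_φS, Lfun_smul_real]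

lemma Lfun_creationOp (a : ℝ) (g : SchwartzMap ℝ ℂ) :
    Lfun a (creationOp g) = (((Real.sqrt 2)⁻¹ * a : ℝ) : ℂ) * Lfun a g := by
  have hφd : deriv (⇑(φS a)) = fun x : ℝ => (((a - x) * gR (x - a) : ℝ) : ℂ) :=
    funext (deriv_φS a)
  have int_xg : Integrable (fun x : ℝ => (x : ℂ) * g x * φS a x) volume := by
    have he : (fun x : ℝ => (x : ℂ) * g x * φS a x)
        = fun x => (xmulS g) x * φS a x := by
      funext x; rw [xmulS_apply]
    rw [he]; exact integrable_mul _ _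
  have int_dg : Integrable (fun x : ℝ => deriv (⇑g) x * φS a x) volume := by
    have he : (fun x : ℝ => deriv (⇑g) x * φS a x)
        = fun x => (SchwartzMap.derivCLM ℝ ℂ g) x * φS a x := by
      funext x; rw [SchwartzMap.derivCLM_apply]
    rw [he]; exact integrable_mul _ _
  have int_gdφ : Integrable (fun x : ℝ => g x * deriv (⇑(φS a)) x) volume := by
    have he : (fun x : ℝ => g x * deriv (⇑(φS a)) x)
        = fun x => g x * (SchwartzMap.derivCLM ℝ ℂ (φS a)) x := by
      funext x; rw [SchwartzMap.derivCLM_apply]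
    rw [he]; exact integrable_mul _ _
  have hsplit : (∫ x : ℝ, deriv (⇑g) x * φS a x) + (∫ x : ℝ, g x * deriv (⇑(φS a)) x) = 0 := by
    rw [← integral_add int_dg int_gdφ]; exact integral_ibp g (φS a)
  have hcre : (fun x : ℝ => (creationOp g) x * φS a x)
      = fun x : ℝ => (((Real.sqrt 2)⁻¹ : ℝ) : ℂ)
          * (((x : ℂ) * g x * φS a x) - (deriv (⇑g) x * φS a x)) := by
    funext x; rw [creationOp_apply]; ring
  have h2 : (∫ x : ℝ, deriv (⇑g) x * φS a x) = - ∫ x : ℝ, g x * deriv (⇑(φS a)) x :=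
    eq_neg_of_add_eq_zero_left hsplit
  have h3 : (∫ x : ℝ, (x : ℂ) * g x * φS a x) + (∫ x : ℝ, g x * deriv (⇑(φS a)) x)
      = (a : ℂ) * ∫ x : ℝ, g x * φS a x := by
    rw [← integral_add int_xg int_gdφ]
    have h4 : (fun x : ℝ => (x : ℂ) * g x * φS a x + g x * deriv (⇑(φS a)) x)
        = fun x : ℝ => (a : ℂ) * (g x * φS a x) := by
      funext x
      rw [hφd, φS_apply]
      push_cast
      ring
    rw [h4, integral_const_mul]
  unfold Lfun
  rw [hcre, integral_const_mul, integral_sub int_xg int_dg, h2, sub_neg_eq_add, h3]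
  push_cast
  ring

lemma Lfun_creationOp_iter (a : ℝ) (m : ℕ) :
    Lfun a (creationOp^[m] (φS a))
      = ((((Real.sqrt 2)⁻¹ * a) ^ m : ℝ) : ℂ) * Lfun a (φS a) := by
  induction m with
  | zero => simp
  | succ m ih =>
    rw [Function.iterate_succ_apply', Lfun_creationOp, ih]
    push_cast
    ring

lemma derivCLM_smulC (c : ℂ) (f : SchwartzMap ℝ ℂ) :
    SchwartzMap.derivCLM ℝ ℂ (c • f) = c • SchwartzMap.derivCLM ℝ ℂ f := by
  apply SchwartzMap.ext; intro x
  rw [SchwartzMap.derivCLM_apply, SchwartzMap.smul_apply, SchwartzMap.derivCLM_apply]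
  have he : ⇑(c • f) = fun y => c • f y := funext fun y => SchwartzMap.smul_apply _ _ _
  rw [he]; exact (f.differentiableAt.hasDerivAt.const_smul c).deriv

lemma xmulS_smulC (c : ℂ) (f : SchwartzMap ℝ ℂ) : xmulS (c • f) = c • xmulS f := by
  apply SchwartzMap.ext; intro x
  rw [SchwartzMap.smul_apply, xmulS_apply, xmulS_apply, SchwartzMap.smul_apply, smul_eq_mul,
    smul_eq_mul]
  ring

lemma creationOp_isLinear : IsLinearMap ℂ creationOp := by
  constructor
  · intro f g
    unfold creationOp
    rw [map_add, map_add]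
    rw [show xmulS f + xmulS g - (SchwartzMap.derivCLM ℝ ℂ f + SchwartzMap.derivCLM ℝ ℂ g)
      = (xmulS f - SchwartzMap.derivCLM ℝ ℂ f) + (xmulS g - SchwartzMap.derivCLM ℝ ℂ g) by abel]
    rw [smul_add]
  · intro c f
    unfold creationOp
    rw [xmulS_smulC, derivCLM_smulC, ← smul_sub, smul_comm]

lemma annihilationOp_isLinear : IsLinearMap ℂ annihilationOp := by
  constructor
  · intro f g
    unfold annihilationOp
    rw [map_add, map_add]
    rw [show SchwartzMap.derivCLM ℝ ℂ f + SchwartzMap.derivCLM ℝ ℂ g + (xmulS f + xmulS g)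
      = (SchwartzMap.derivCLM ℝ ℂ f + xmulS f) + (SchwartzMap.derivCLM ℝ ℂ g + xmulS g) by abel]
    rw [smul_add]
  · intro c f
    unfold annihilationOp
    rw [xmulS_smulC, derivCLM_smulC, ← smul_add, smul_comm]

lemma creationOp_continuous : Continuous creationOp :=
  (xmulS.continuous.sub (SchwartzMap.derivCLM ℝ ℂ).continuous).const_smul (Real.sqrt 2)⁻¹

lemma annihilationOp_continuous : Continuous annihilationOp :=
  ((SchwartzMap.derivCLM ℝ ℂ).continuous.add xmulS.continuous).const_smul (Real.sqrt 2)⁻¹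

/-- The sup-norm seminorm on Schwartz space. -/
def p0 : Seminorm ℝ (SchwartzMap ℝ ℂ) := SchwartzMap.seminorm ℝ 0 0

lemma p0_continuous : Continuous p0 :=
  (schwartz_withSeminorms ℝ ℝ ℂ).continuous_seminorm (0, 0)

lemma sqrt2_pos : (0:ℝ) < Real.sqrt 2 := Real.sqrt_pos.mpr two_pos

lemma one_lt_sqrt2 : (1:ℝ) < Real.sqrt 2 := by
  rw [show (1:ℝ) = Real.sqrt 1 from (Real.sqrt_one).symm]
  exact Real.sqrt_lt_sqrt (by norm_num) (by norm_num)

lemma p0_growth {T : SchwartzMap ℝ ℂ → SchwartzMap ℝ ℂ}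
    (HT : ∀ (a : ℝ) (m : ℕ), Lfun a (T^[m] (φS a))
      = ((((Real.sqrt 2)⁻¹ * a) ^ m : ℝ) : ℂ) * Lfun a (φS a))
    (a : ℝ) (ha : 0 ≤ a) (m : ℕ) :
    ((Real.sqrt 2)⁻¹ * a) ^ m ≤ Real.sqrt 2 * p0 (T^[m] (φS a)) := by
  have hr : 0 ≤ (Real.sqrt 2)⁻¹ * a := by positivity
  have h1 : ‖Lfun a (T^[m] (φS a))‖ = ((Real.sqrt 2)⁻¹ * a) ^ m * Real.sqrt π := by
    rw [HT, Lfun_φS_self, norm_mul, Complex.norm_real, Complex.norm_real,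
      Real.norm_eq_abs, Real.norm_eq_abs, abs_of_nonneg (pow_nonneg hr m),
      abs_of_nonneg (Real.sqrt_nonneg π)]
  have h2 := Lfun_norm_le a (T^[m] (φS a))
  rw [h1] at h2
  have h3 : Real.sqrt (2 * π) = Real.sqrt 2 * Real.sqrt π := Real.sqrt_mul (by norm_num) π
  rw [h3] at h2
  have hπ : 0 < Real.sqrt π := Real.sqrt_pos.mpr Real.pi_pos
  have h4 : ((Real.sqrt 2)⁻¹ * a) ^ m * Real.sqrt π
      ≤ Real.sqrt 2 * p0 (T^[m] (φS a)) * Real.sqrt π := by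
    calc ((Real.sqrt 2)⁻¹ * a) ^ m * Real.sqrt π
        ≤ Real.sqrt 2 * Real.sqrt π * SchwartzMap.seminorm ℝ 0 0 (T^[m] (φS a)) := h2
      _ = Real.sqrt 2 * p0 (T^[m] (φS a)) * Real.sqrt π := by rw [p0]; ring
  exact le_of_mul_le_mul_right h4 hπ

open MeasureTheory in
lemma q_growth (q : Seminorm ℝ (SchwartzMap ℝ ℂ)) (hq : Continuous q) :
    ∃ (K : ℕ) (D : ℝ), 1 ≤ D ∧ ∀ a : ℝ, 0 ≤ a → q (φS a) ≤ D * (1 + a) ^ K := by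
  obtain ⟨s, C, hC, hqle⟩ :=
    Seminorm.bound_of_continuous (schwartz_withSeminorms ℝ ℝ ℂ) q hq
  set SB : ℝ := ∑ kn ∈ s, 2 ^ kn.1 *
    (SchwartzMap.seminorm ℝ 0 kn.2 gaussS + SchwartzMap.seminorm ℝ kn.1 kn.2 gaussS) with hSB
  have hSB0 : 0 ≤ SB := by
    refine Finset.sum_nonneg fun kn _ => ?_
    have h1 : 0 ≤ SchwartzMap.seminorm ℝ 0 kn.2 gaussS := apply_nonneg _ _
    have h2 : 0 ≤ SchwartzMap.seminorm ℝ kn.1 kn.2 gaussS := apply_nonneg _ _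
    positivity
  refine ⟨∑ kn ∈ s, kn.1, max 1 ((C : ℝ) * SB), le_max_left _ _, fun a ha => ?_⟩
  set K := ∑ kn ∈ s, kn.1 with hK
  have h1 : q (φS a) ≤ (C : ℝ) * (s.sup (schwartzSeminormFamily ℝ ℝ ℂ)) (φS a) := by
    have := hqle (φS a)
    simpa [Seminorm.smul_apply, NNReal.smul_def, smul_eq_mul] using this
  have h2 : (s.sup (schwartzSeminormFamily ℝ ℝ ℂ)) (φS a) ≤ (1 + a) ^ K * SB := by
    have hnn : 0 ≤ (1 + a) ^ K * SB := by positivity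
    refine Seminorm.finset_sup_apply_le hnn fun kn hkn => ?_
    have h3 := seminorm_φS_le kn.1 kn.2 a
    rw [abs_of_nonneg ha] at h3
    have hterm0 : 0 ≤ 2 ^ kn.1 *
        (SchwartzMap.seminorm ℝ 0 kn.2 gaussS + SchwartzMap.seminorm ℝ kn.1 kn.2 gaussS) := by
      have hh1 : 0 ≤ SchwartzMap.seminorm ℝ 0 kn.2 gaussS := apply_nonneg _ _
      have hh2 : 0 ≤ SchwartzMap.seminorm ℝ kn.1 kn.2 gaussS := apply_nonneg _ _
      positivity
    have hkK : kn.1 ≤ K := by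
      rw [hK]
      exact Finset.single_le_sum (f := fun p : ℕ × ℕ => p.1) (fun _ _ => Nat.zero_le _) hkn
    have h4 : (1 + a) ^ kn.1 ≤ (1 + a) ^ K := pow_le_pow_right₀ (by linarith) hkK
    have h5 : 2 ^ kn.1 *
        (SchwartzMap.seminorm ℝ 0 kn.2 gaussS + SchwartzMap.seminorm ℝ kn.1 kn.2 gaussS)
          ≤ SB := by
      rw [hSB]
      refine Finset.single_le_sum (f := fun kn : ℕ × ℕ => 2 ^ kn.1 *
        (SchwartzMap.seminorm ℝ 0 kn.2 gaussS + SchwartzMap.seminorm ℝ kn.1 kn.2 gaussS))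
        (fun kn _ => ?_) hkn
      have hh1 : 0 ≤ SchwartzMap.seminorm ℝ 0 kn.2 gaussS := apply_nonneg _ _
      have hh2 : 0 ≤ SchwartzMap.seminorm ℝ kn.1 kn.2 gaussS := apply_nonneg _ _
      positivity
    calc schwartzSeminormFamily ℝ ℝ ℂ kn (φS a)
        = SchwartzMap.seminorm ℝ kn.1 kn.2 (φS a) := rfl
      _ ≤ (1 + a) ^ kn.1 * (2 ^ kn.1 *
            (SchwartzMap.seminorm ℝ 0 kn.2 gaussS
              + SchwartzMap.seminorm ℝ kn.1 kn.2 gaussS)) := h3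
      _ ≤ (1 + a) ^ K * SB := mul_le_mul h4 h5 hterm0 (by positivity)
  calc q (φS a) ≤ (C : ℝ) * ((1 + a) ^ K * SB) :=
        h1.trans (mul_le_mul_of_nonneg_left h2 C.coe_nonneg)
    _ = ((C : ℝ) * SB) * (1 + a) ^ K := by ring
    _ ≤ max 1 ((C : ℝ) * SB) * (1 + a) ^ K :=
        mul_le_mul_of_nonneg_right (le_max_right _ _) (by positivity)

lemma key_lemma {T : SchwartzMap ℝ ℂ → SchwartzMap ℝ ℂ}
    (hsm : ∀ (c : ℝ) (f : SchwartzMap ℝ ℂ), T (c • f) = c • T f)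
    (HT : ∀ (a : ℝ) (m : ℕ), Lfun a (T^[m] (φS a))
      = ((((Real.sqrt 2)⁻¹ * a) ^ m : ℝ) : ℂ) * Lfun a (φS a)) :
    ∀ q : Seminorm ℝ (SchwartzMap ℝ ℂ), Continuous q →
      ∃ m : ℕ, 1 ≤ m ∧ ∀ C : ℝ, ∃ f : SchwartzMap ℝ ℂ, q f ≤ 1 ∧ C < p0 (T^[m] f) := by
  intro q hq
  obtain ⟨K, D, hD, hbound⟩ := q_growth q hq
  have hD0 : (0:ℝ) < D := lt_of_lt_of_le one_pos hD
  refine ⟨K + 1, Nat.le_add_left 1 K, fun C => ?_⟩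
  have hs2 : (0:ℝ) < Real.sqrt 2 := sqrt2_pos
  set s2 := Real.sqrt 2 with hs2def
  set E : ℝ := D * 2 ^ K * s2 ^ (K + 1) * s2 with hE
  have hE0 : (0:ℝ) < E := by positivity
  set a : ℝ := max 1 (E * (C + 1)) with ha
  have ha1 : (1:ℝ) ≤ a := le_max_left _ _
  have ha0 : (0:ℝ) ≤ a := by linarith
  have hqφ : 0 < max 1 (q (φS a)) := lt_of_lt_of_le one_pos (le_max_left _ _)
  set c : ℝ := (max 1 (q (φS a)))⁻¹ with hc
  have hc0 : 0 < c := inv_pos.mpr hqφ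
  refine ⟨c • φS a, ?_, ?_⟩
  · rw [map_smul_eq_mul, Real.norm_eq_abs, abs_of_pos hc0, hc]
    rw [inv_mul_le_iff₀ hqφ, mul_one]
    exact le_max_right _ _
  · rw [iterate_smul_real hsm (K + 1) c (φS a), map_smul_eq_mul, Real.norm_eq_abs,
      abs_of_pos hc0]
    have hgrow := p0_growth HT a ha0 (K + 1)
    have hp0 : (s2⁻¹ * a) ^ (K + 1) / s2 ≤ p0 (T^[K + 1] (φS a)) := by
      rw [div_le_iff₀ hs2]
      calc (s2⁻¹ * a) ^ (K + 1) ≤ s2 * p0 (T^[K + 1] (φS a)) := hgrow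
        _ = p0 (T^[K + 1] (φS a)) * s2 := mul_comm _ _
    have hq1 : max 1 (q (φS a)) ≤ D * (1 + a) ^ K := by
      refine max_le ?_ (hbound a ha0)
      have hpw : (1:ℝ) ≤ (1 + a) ^ K := one_le_pow₀ (by linarith)
      nlinarith
    have hc_ge : (D * (1 + a) ^ K)⁻¹ ≤ c := by
      rw [hc]
      exact inv_anti₀ hqφ hq1
    have hmid : a / E ≤ (D * (1 + a) ^ K)⁻¹ * ((s2⁻¹ * a) ^ (K + 1) / s2) := by
      have e1 : (s2⁻¹ * a) ^ (K + 1) = a * a ^ K / s2 ^ (K + 1) := by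
        rw [mul_pow, inv_pow, pow_succ]
        ring
      have hpow : (1 + a) ^ K ≤ 2 ^ K * a ^ K := by
        calc (1 + a) ^ K ≤ (2 * a) ^ K :=
              pow_le_pow_left₀ (by linarith) (by linarith) K
          _ = 2 ^ K * a ^ K := mul_pow _ _ _
      have hYpos : (0:ℝ) < D * (1 + a) ^ K * (s2 ^ (K + 1) * s2) := by positivity
      have hrhs : (D * (1 + a) ^ K)⁻¹ * ((a * a ^ K / s2 ^ (K + 1)) / s2)
          = (a * a ^ K) / (D * (1 + a) ^ K * (s2 ^ (K + 1) * s2)) := by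
        field_simp
      rw [e1, hrhs, div_le_div_iff₀ hE0 hYpos, hE]
      calc a * (D * (1 + a) ^ K * (s2 ^ (K + 1) * s2))
          = (a * D * (s2 ^ (K + 1) * s2)) * (1 + a) ^ K := by ring
        _ ≤ (a * D * (s2 ^ (K + 1) * s2)) * (2 ^ K * a ^ K) :=
            mul_le_mul_of_nonneg_left hpow (by positivity)
        _ = a * a ^ K * (D * 2 ^ K * s2 ^ (K + 1) * s2) := by ring
    have hfinal : a / E ≤ c * p0 (T^[K + 1] (φS a)) :=
      hmid.trans (mul_le_mul hc_ge hp0 (by positivity) hc0.le)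
    have hCa : C + 1 ≤ a / E := by
      have h1 : E * (C + 1) ≤ a := le_max_right _ _
      rw [le_div_iff₀ hE0]
      nlinarith
    linarith

lemma notPB {T : SchwartzMap ℝ ℂ → SchwartzMap ℝ ℂ}
    (key : ∀ q : Seminorm ℝ (SchwartzMap ℝ ℂ), Continuous q →
      ∃ m : ℕ, 1 ≤ m ∧ ∀ C : ℝ, ∃ f : SchwartzMap ℝ ℂ, q f ≤ 1 ∧ C < p0 (T^[m] f)) :
    ¬ PowerBoundedS T := by
  intro hPB
  obtain ⟨q, hqc, hbd⟩ := hPB p0 p0_continuous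
  obtain ⟨m, hm1, hC⟩ := key q hqc
  obtain ⟨f, hf1, hf2⟩ := hC 1
  have := hbd m hm1 f
  linarith

open MeasureTheory in
lemma notME {T : SchwartzMap ℝ ℂ → SchwartzMap ℝ ℂ}
    (HT : ∀ (a : ℝ) (m : ℕ), Lfun a (T^[m] (φS a))
      = ((((Real.sqrt 2)⁻¹ * a) ^ m : ℝ) : ℂ) * Lfun a (φS a)) :
    ¬ MeanErgodicS T := by
  rintro ⟨P, hP⟩
  set a : ℝ := 2 * Real.sqrt 2 with ha
  have hr : (Real.sqrt 2)⁻¹ * a = 2 := by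
    rw [ha, mul_comm (2:ℝ) (Real.sqrt 2), ← mul_assoc, inv_mul_cancel₀ sqrt2_pos.ne', one_mul]
  set s : ℕ → SchwartzMap ℝ ℂ := fun n => (n:ℂ)⁻¹ • ∑ m ∈ Icc 1 n, T^[m] (φS a) with hs
  have hconv : Tendsto s atTop (nhds (P (φS a))) := hP (φS a)
  have hLn : ∀ n : ℕ, Lfun a (s n)
      = ((((n:ℝ)⁻¹ * ((∑ m ∈ Icc 1 n, (2:ℝ) ^ m) * Real.sqrt π)) : ℝ) : ℂ) := by
    intro n
    rw [hs]
    simp only []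
    rw [Lfun_smul]
    have hsum : Lfun a (∑ m ∈ Icc 1 n, T^[m] (φS a))
        = ∑ m ∈ Icc 1 n, Lfun a (T^[m] (φS a)) := by
      unfold Lfun
      have hsx : (⇑(∑ m ∈ Icc 1 n, T^[m] (φS a)) : ℝ → ℂ)
          = ∑ m ∈ Icc 1 n, (⇑(T^[m] (φS a)) : ℝ → ℂ) :=
        map_sum (SchwartzMap.coeHom (SchwartzMap ℝ ℂ) ℝ ℂ) (fun m => T^[m] (φS a)) (Icc 1 n)
      have hcoe : (fun x : ℝ => (∑ m ∈ Icc 1 n, T^[m] (φS a)) x * φS a x)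
          = fun x : ℝ => ∑ m ∈ Icc 1 n, (T^[m] (φS a)) x * φS a x := by
        funext x
        rw [show (∑ m ∈ Icc 1 n, T^[m] (φS a)) x
            = ∑ m ∈ Icc 1 n, (T^[m] (φS a)) x from by rw [hsx]; exact Finset.sum_apply _ _ _]
        rw [Finset.sum_mul]
      rw [hcoe]
      exact integral_finset_sum _ (fun m _ => integrable_mul _ _)
    rw [hsum]
    have hterm : ∀ m ∈ Icc 1 n, Lfun a (T^[m] (φS a))
        = (((2:ℝ) ^ m * Real.sqrt π : ℝ) : ℂ) := by
      intro m _
      rw [HT a m, hr, Lfun_φS_self]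
      push_cast
      ring
    rw [Finset.sum_congr rfl hterm]
    push_cast
    rw [← Finset.sum_mul]
  have hLP : Tendsto (fun n => Lfun a (s n)) atTop (nhds (Lfun a (P (φS a)))) := by
    have h1 : Tendsto (fun n => s n - P (φS a)) atTop (nhds 0) := by
      simpa using hconv.sub_const (P (φS a))
    have h2 : Tendsto (fun n => p0 (s n - P (φS a))) atTop (nhds 0) := by
      have := (p0_continuous.tendsto 0).comp h1
      simpa [map_zero, Function.comp_def] using this
    have hb : ∀ n, ‖Lfun a (s n) - Lfun a (P (φS a))‖
        ≤ Real.sqrt (2 * π) * p0 (s n - P (φS a)) := fun n => by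
      rw [← Lfun_sub]
      exact Lfun_norm_le _ _
    have h3 : Tendsto (fun n => Lfun a (s n) - Lfun a (P (φS a))) atTop (nhds 0) :=
      squeeze_zero_norm hb (by simpa using h2.const_mul (Real.sqrt (2 * π)))
    simpa using h3.add_const (Lfun a (P (φS a)))
  have hre : Tendsto (fun n : ℕ => (n:ℝ)⁻¹ * ((∑ m ∈ Icc 1 n, (2:ℝ) ^ m) * Real.sqrt π))
      atTop (nhds ((Lfun a (P (φS a))).re)) := by
    have hcomp := (Complex.continuous_re.tendsto _).comp hLP
    have heq : ((fun z : ℂ => z.re) ∘ fun n => Lfun a (s n))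
        = fun n : ℕ => (n:ℝ)⁻¹ * ((∑ m ∈ Icc 1 n, (2:ℝ) ^ m) * Real.sqrt π) := by
      funext n
      show (Lfun a (s n)).re = _
      rw [hLn n, Complex.ofReal_re]
    rw [heq] at hcomp
    exact hcomp
  have hdiv : Tendsto (fun n : ℕ => (n:ℝ)⁻¹ * ((∑ m ∈ Icc 1 n, (2:ℝ) ^ m) * Real.sqrt π))
      atTop atTop := by
    have hπ : (0:ℝ) < Real.sqrt π := Real.sqrt_pos.mpr Real.pi_pos
    have hgeo : Tendsto (fun n : ℕ => (Real.sqrt 2) ^ n * ((Real.sqrt 2 - 1) * Real.sqrt π))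
        atTop atTop := by
      refine Tendsto.atTop_mul_const ?_ (tendsto_pow_atTop_atTop_of_one_lt one_lt_sqrt2)
      nlinarith [one_lt_sqrt2, hπ]
    refine tendsto_atTop_mono' atTop ?_ hgeo
    filter_upwards [eventually_ge_atTop 1] with n hn
    have hnpos : (0:ℝ) < n := by exact_mod_cast hn
    have hsum : (2:ℝ) ^ n ≤ ∑ m ∈ Icc 1 n, (2:ℝ) ^ m :=
      Finset.single_le_sum (f := fun m => (2:ℝ) ^ m) (fun m _ => by positivity)
        (Finset.mem_Icc.mpr ⟨hn, le_refl n⟩)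
    have hgeon : (Real.sqrt 2) ^ n * ((Real.sqrt 2 - 1) * (n:ℝ)) ≤ 2 ^ n := by
      have hss : (Real.sqrt 2) ^ n * (Real.sqrt 2) ^ n = 2 ^ n := by
        rw [← mul_pow, Real.mul_self_sqrt (by norm_num)]
      have h1 : 1 + (n:ℝ) * (Real.sqrt 2 - 1) ≤ (1 + (Real.sqrt 2 - 1)) ^ n :=
        one_add_mul_le_pow (by nlinarith [sqrt2_pos]) n
      have h1' : (Real.sqrt 2 - 1) * (n:ℝ) ≤ (Real.sqrt 2) ^ n := by
        have he : (1:ℝ) + (Real.sqrt 2 - 1) = Real.sqrt 2 := by ring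
        rw [he] at h1
        nlinarith
      calc (Real.sqrt 2) ^ n * ((Real.sqrt 2 - 1) * (n:ℝ))
          ≤ (Real.sqrt 2) ^ n * (Real.sqrt 2) ^ n :=
            mul_le_mul_of_nonneg_left h1' (by positivity)
        _ = 2 ^ n := hss
    rw [inv_mul_eq_div, le_div_iff₀ hnpos]
    calc (Real.sqrt 2) ^ n * ((Real.sqrt 2 - 1) * Real.sqrt π) * (n:ℝ)
        = ((Real.sqrt 2) ^ n * ((Real.sqrt 2 - 1) * (n:ℝ))) * Real.sqrt π := by ring
      _ ≤ 2 ^ n * Real.sqrt π := mul_le_mul_of_nonneg_right hgeon hπ.le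
      _ ≤ (∑ m ∈ Icc 1 n, (2:ℝ) ^ m) * Real.sqrt π :=
          mul_le_mul_of_nonneg_right hsum hπ.le
  exact not_tendsto_nhds_of_tendsto_atTop hdiv _ hre

lemma master {T : SchwartzMap ℝ ℂ → SchwartzMap ℝ ℂ}
    (hsm : ∀ (c : ℝ) (f : SchwartzMap ℝ ℂ), T (c • f) = c • T f)
    (HT : ∀ (a : ℝ) (m : ℕ), Lfun a (T^[m] (φS a))
      = ((((Real.sqrt 2)⁻¹ * a) ^ m : ℝ) : ℂ) * Lfun a (φS a)) :
    (∃ p : Seminorm ℝ (SchwartzMap ℝ ℂ), Continuous p ∧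
      ∀ q : Seminorm ℝ (SchwartzMap ℝ ℂ), Continuous q →
        ∃ m : ℕ, 1 ≤ m ∧ ∀ C : ℝ, ∃ f : SchwartzMap ℝ ℂ, q f ≤ 1 ∧ C < p (T^[m] f)) ∧
    ¬ PowerBoundedS T ∧ ¬ MeanErgodicS T :=
  ⟨⟨p0, p0_continuous, key_lemma hsm HT⟩, notPB (key_lemma hsm HT), notME HT⟩

end S19

/-- Theorem 4.4 (iv): the creation and annihilation operators are continuous linear operators
on `𝒮(ℝ)`, but neither is topologizable — for each of them there is a continuous seminorm `p`
such that for every continuous seminorm `q` some power has unbounded `p`-norm on the `q`-unit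
ball; in particular neither is power bounded nor mean ergodic. -/
theorem statement19 :
    (IsLinearMap ℂ creationOp ∧ Continuous creationOp) ∧
    (IsLinearMap ℂ annihilationOp ∧ Continuous annihilationOp) ∧
    (∀ T ∈ ({creationOp, annihilationOp} : Set (SchwartzMap ℝ ℂ → SchwartzMap ℝ ℂ)),
      (∃ p : Seminorm ℝ (SchwartzMap ℝ ℂ), Continuous p ∧
        ∀ q : Seminorm ℝ (SchwartzMap ℝ ℂ), Continuous q →
          ∃ m : ℕ, 1 ≤ m ∧ ∀ C : ℝ, ∃ f : SchwartzMap ℝ ℂ, q f ≤ 1 ∧ C < p (T^[m] f)) ∧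
      ¬ PowerBoundedS T ∧ ¬ MeanErgodicS T) := by
  refine ⟨⟨S19.creationOp_isLinear, S19.creationOp_continuous⟩,
    ⟨S19.annihilationOp_isLinear, S19.annihilationOp_continuous⟩, fun T hT => ?_⟩
  simp only [Set.mem_insert_iff, Set.mem_singleton_iff] at hT
  rcases hT with rfl | rfl
  · exact S19.master S19.creationOp_smul_real S19.Lfun_creationOp_iter
  · exact S19.master S19.annihilationOp_smul_real S19.Lfun_annihilationOp_iter
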